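/- Let Φ : ℝ² → set of ℝ² be defined by Φ(E) = E + Γ where Γ is the graph of a C¹ function f : [a,b] → ℝ. If D is an open disk in the plane with closure D̄, then Φ(D̄) \ Φ(D) has two-dimensional Lebesgue measure zero. More precisely, the intersection of Φ(D̄) \ Φ(D) with any vertical line contains at most two points. -/

import Mathlib

open Real MeasureTheory Set Filter
open scoped Pointwise ENNReal

noncomputable section

instance : Fact (0 < Real.pi) := ⟨Real.pi_pos⟩

/-- Unoriented direction of a plane vector, as an element of ℝ/πℤ. -/
def dir (v : ℝ × ℝ) : AddCircle Real.pi :=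
  if v.1 = 0 then ((Real.pi / 2 : ℝ) : AddCircle Real.pi)
  else ((Real.arctan (v.2 / v.1) : ℝ) : AddCircle Real.pi)

/-- Euclidean length of a plane vector. -/
def elen (v : ℝ × ℝ) : ℝ := Real.sqrt (v.1 ^ 2 + v.2 ^ 2)

/-- Open Euclidean δ-neighborhood of a plane set. -/
def enbhd (δ : ℝ) (S : Set (ℝ × ℝ)) : Set (ℝ × ℝ) := {x | ∃ y ∈ S, elen (x - y) < δ}

/-- Membership in the closed arc `[θ₁, θ₂]` of ℝ/πℤ (standard orientation). -/
def arcMemCC (θ₁ θ₂ θ : AddCircle Real.pi) : Prop :=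
  ∃ t₁ t₂ t : ℝ, (t₁ : AddCircle Real.pi) = θ₁ ∧ (t₂ : AddCircle Real.pi) = θ₂ ∧
    (t : AddCircle Real.pi) = θ ∧ t₁ ≤ t ∧ t ≤ t₂ ∧ t₂ - t₁ < Real.pi

/-- Membership in the open arc `(θ₁, θ₂)` of ℝ/πℤ (standard orientation). -/
def arcMemOO (θ₁ θ₂ θ : AddCircle Real.pi) : Prop :=
  ∃ t₁ t₂ t : ℝ, (t₁ : AddCircle Real.pi) = θ₁ ∧ (t₂ : AddCircle Real.pi) = θ₂ ∧
    (t : AddCircle Real.pi) = θ ∧ t₁ < t ∧ t < t₂ ∧ t₂ - t₁ < Real.pi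

lemma aux_sq_combo (r x1 x2 p1 p2 z1 z2 l : ℝ)
    (hx : (x1-z1)^2+(x2-z2)^2 ≤ r^2) (hp : (p1-z1)^2+(p2-z2)^2 < r^2)
    (h0 : 0 < l) (h1 : l ≤ 1) :
    (x1 + l*(p1-x1) - z1)^2 + (x2 + l*(p2-x2) - z2)^2 < r^2 := by
  nlinarith [sq_nonneg (x1-p1), sq_nonneg (x2-p2), mul_pos h0 (sub_pos.mpr hp),
    mul_nonneg (mul_nonneg h0.le h0.le) (sq_nonneg (x1-p1)),
    mul_nonneg (mul_nonneg h0.le h0.le) (sq_nonneg (x2-p2)),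
    mul_nonneg h0.le (sq_nonneg (x1-p1)), mul_nonneg h0.le (sq_nonneg (x2-p2))]

lemma aux_sq_conv (r x1 x2 y1 y2 z1 z2 u : ℝ)
    (hx : (x1-z1)^2+(x2-z2)^2 < r^2) (hy : (y1-z1)^2+(y2-z2)^2 < r^2)
    (h0 : 0 ≤ u) (h1 : u ≤ 1) :
    (u*x1+(1-u)*y1 - z1)^2 + (u*x2+(1-u)*y2 - z2)^2 < r^2 := by
  nlinarith [mul_nonneg (mul_nonneg h0 (sub_nonneg.mpr h1)) (sq_nonneg (x1-y1)),
    mul_nonneg (mul_nonneg h0 (sub_nonneg.mpr h1)) (sq_nonneg (x2-y2)),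
    mul_le_mul_of_nonneg_left hx.le h0,
    mul_le_mul_of_nonneg_left hy.le (sub_nonneg.mpr h1)]

lemma aux_sq_mid (r x1 x2 y2 z1 z2 : ℝ)
    (hx : (x1-z1)^2+(x2-z2)^2 ≤ r^2) (hy : (x1-z1)^2+(y2-z2)^2 ≤ r^2) (hne : x2 ≠ y2) :
    (x1-z1)^2 + ((x2+y2)/2 - z2)^2 < r^2 := by
  have h : 0 < (x2 - y2)^2 :=
    lt_of_le_of_ne (sq_nonneg _) (Ne.symm (pow_ne_zero 2 (sub_ne_zero.mpr hne)))
  nlinarith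

lemma aux_interval (I : Set ℝ) (hne : I.Nonempty) (hbdd : Bornology.IsBounded I)
    (hconn : IsPreconnected I) : (closure I \ I).encard ≤ 2 := by
  have hord := hconn.ordConnected
  have hba : BddAbove I := hbdd.bddAbove
  have hbb : BddBelow I := hbdd.bddBelow
  have hIcc : closure I ⊆ Set.Icc (sInf I) (sSup I) :=
    closure_minimal (fun x hx => ⟨csInf_le hbb hx, le_csSup hba hx⟩) isClosed_Icc
  have hsub : closure I \ I ⊆ {sInf I, sSup I} := by
    rintro y ⟨hyc, hyn⟩
    by_contra h
    rw [Set.mem_insert_iff, Set.mem_singleton_iff] at h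
    push_neg at h
    have hy := hIcc hyc
    have h1 : sInf I < y := lt_of_le_of_ne hy.1 (Ne.symm h.1)
    have h2 : y < sSup I := lt_of_le_of_ne hy.2 h.2
    obtain ⟨p, hp, hpy⟩ := exists_lt_of_csInf_lt hne h1
    obtain ⟨q, hq, hyq⟩ := exists_lt_of_lt_csSup hne h2
    exact hyn (hord.out hp hq ⟨hpy.le, hyq.le⟩)
  calc (closure I \ I).encard ≤ ({sInf I, sSup I} : Set ℝ).encard := Set.encard_mono hsub
    _ ≤ 2 := by
        refine (Set.encard_insert_le _ _).trans ?_
        rw [Set.encard_singleton]; rfl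

-- basic elen facts
lemma elen_lt_iff {v : ℝ × ℝ} {r : ℝ} (hr : 0 < r) : elen v < r ↔ v.1^2 + v.2^2 < r^2 := by
  rw [elen, Real.sqrt_lt' hr]

lemma elen_le_sq {v : ℝ × ℝ} {r : ℝ} (h : elen v ≤ r) : v.1^2 + v.2^2 ≤ r^2 := by
  have h0 : (0:ℝ) ≤ v.1^2 + v.2^2 := by positivity
  have := Real.sq_sqrt h0
  have h2 : (0:ℝ) ≤ Real.sqrt (v.1^2+v.2^2) := Real.sqrt_nonneg _
  calc v.1^2+v.2^2 = (Real.sqrt (v.1^2+v.2^2))^2 := this.symm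
    _ ≤ r^2 := pow_le_pow_left₀ h2 h 2

lemma abs_fst_le_elen (v : ℝ × ℝ) : |v.1| ≤ elen v := by
  rw [elen, ← Real.sqrt_sq_eq_abs]
  exact Real.sqrt_le_sqrt (by nlinarith [sq_nonneg v.2])

lemma continuous_elen : Continuous elen := by
  unfold elen; fun_prop

theorem stmt12 (a b : ℝ) (hab : a ≤ b) (f f' : ℝ → ℝ)
    (hderiv : ∀ t ∈ Set.Icc a b, HasDerivAt f (f' t) t)
    (hcont : ContinuousOn f' (Set.Icc a b))
    (z : ℝ × ℝ) (r : ℝ) (hr : 0 < r) :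
    volume ((closure {x : ℝ × ℝ | elen (x - z) < r} + (fun t => (t, f t)) '' Set.Icc a b) \
        ({x : ℝ × ℝ | elen (x - z) < r} + (fun t => (t, f t)) '' Set.Icc a b)) = 0 ∧
    ∀ α : ℝ,
      (((closure {x : ℝ × ℝ | elen (x - z) < r} + (fun t => (t, f t)) '' Set.Icc a b) \
          ({x : ℝ × ℝ | elen (x - z) < r} + (fun t => (t, f t)) '' Set.Icc a b)) ∩
        {w : ℝ × ℝ | w.1 = α}).encard ≤ 2 := by
  set B : Set (ℝ × ℝ) := {x | elen (x - z) < r} with hBdef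
  set Γ : Set (ℝ × ℝ) := (fun t => (t, f t)) '' Set.Icc a b with hΓdef
  have hfc : ContinuousOn f (Set.Icc a b) := fun t ht =>
    (hderiv t ht).continuousAt.continuousWithinAt
  have hBopen : IsOpen B := by
    have : B = (fun x : ℝ × ℝ => elen (x - z)) ⁻¹' Set.Iio r := rfl
    rw [this]
    exact isOpen_Iio.preimage (continuous_elen.comp (continuous_id.sub continuous_const))
  have hBc : closure B ⊆ {x : ℝ × ℝ | elen (x - z) ≤ r} := by
    refine closure_minimal (fun x hx => show elen (x - z) ≤ r from le_of_lt hx) ?_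
    have : {x : ℝ × ℝ | elen (x - z) ≤ r} = (fun x : ℝ × ℝ => elen (x - z)) ⁻¹' Set.Iic r := rfl
    rw [this]
    exact isClosed_Iic.preimage (continuous_elen.comp (continuous_id.sub continuous_const))
  have hclosBcomp : IsCompact (closure B) := by
    refine (isCompact_closedBall z (r+r)).of_isClosed_subset isClosed_closure ?_
    intro x hx
    have h1 := hBc hx
    have h2 : dist x z ≤ r := by
      rw [Prod.dist_eq]
      refine max_le ?_ ?_
      · rw [Real.dist_eq]
        calc |x.1 - z.1| = |(x - z).1| := rfl
          _ ≤ elen (x - z) := abs_fst_le_elen _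
          _ ≤ r := h1
      · rw [Real.dist_eq]
        have : |(x - z).2| ≤ elen (x - z) := by
          rw [elen, ← Real.sqrt_sq_eq_abs]
          exact Real.sqrt_le_sqrt (by nlinarith [sq_nonneg (x-z).1])
        calc |x.2 - z.2| = |(x - z).2| := rfl
          _ ≤ elen (x - z) := this
          _ ≤ r := h1
    exact Metric.mem_closedBall.mpr (h2.trans (by linarith))
  have hΓcomp : IsCompact Γ := isCompact_Icc.image_of_continuousOn
    (continuousOn_id.prodMk hfc)
  have hTopen : IsOpen (B + Γ) := hBopen.add_right
  have hTclosed : IsClosed (closure B + Γ) := (hclosBcomp.add hΓcomp).isClosed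
  set T : Set (ℝ × ℝ) := (closure B + Γ) \ (B + Γ) with hTdef
  have hTmeas : MeasurableSet T := hTclosed.measurableSet.diff hTopen.measurableSet
  -- slice machinery
  set S : ℝ → Set (ℝ × ℝ) := fun α => {x | α - x.1 ∈ Set.Icc a b} with hSdef
  set g : ℝ → ℝ × ℝ → ℝ := fun α x => x.2 + f (α - x.1) with hgdef
  have hmem : ∀ (α : ℝ) (E : Set (ℝ × ℝ)) (y : ℝ),
      (α, y) ∈ E + Γ ↔ y ∈ g α '' (E ∩ S α) := by
    intro α E y
    rw [Set.mem_add]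
    constructor
    · rintro ⟨e, he, γ, ⟨t, ht, rfl⟩, hsum⟩
      have h1 : e.1 + t = α := congrArg Prod.fst hsum
      have h2 : e.2 + f t = y := congrArg Prod.snd hsum
      have ht' : t = α - e.1 := by linarith
      refine ⟨e, ⟨he, ?_⟩, ?_⟩
      · show α - e.1 ∈ Set.Icc a b; rwa [← ht']
      · show e.2 + f (α - e.1) = y; rw [← ht']; exact h2
    · rintro ⟨x, ⟨hxE, hxS⟩, rfl⟩
      exact ⟨x, hxE, (α - x.1, f (α - x.1)), ⟨α - x.1, hxS, rfl⟩,
        Prod.ext (by simp) (by simp [hgdef])⟩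
  -- key claim
  have hclaim : ∀ α : ℝ,
      ((g α '' (closure B ∩ S α)) \ (g α '' (B ∩ S α))).encard ≤ 2 := by
    intro α
    have hSclosed : IsClosed (S α) := by
      have : S α = (fun x : ℝ × ℝ => α - x.1) ⁻¹' Set.Icc a b := rfl
      rw [this]
      exact isClosed_Icc.preimage (by fun_prop)
    have hgS : ContinuousOn (g α) (S α) := by
      refine ContinuousOn.add continuous_snd.continuousOn ?_
      exact hfc.comp (Continuous.continuousOn (by fun_prop)) (fun x hx => hx)
    rcases Set.eq_empty_or_nonempty (B ∩ S α) with hBS | ⟨p, hpB, hpS⟩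
    · -- empty case: closure B ∩ S α has at most 2 points
      have hlines : closure B ∩ S α ⊆ {x : ℝ × ℝ | x.1 = α - b} ∪ {x : ℝ × ℝ | x.1 = α - a} := by
        rintro x ⟨hxc, hxS⟩
        by_contra hx
        simp only [Set.mem_union, Set.mem_setOf_eq] at hx
        push_neg at hx
        obtain ⟨hxS1, hxS2⟩ := hxS
        have h1 : α - b < x.1 := lt_of_le_of_ne (by linarith) (Ne.symm hx.1)
        have h2 : x.1 < α - a := lt_of_le_of_ne (by linarith) hx.2
        set ε := min (x.1 - (α - b)) ((α - a) - x.1) with hεdef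
        have hε : 0 < ε := lt_min (by linarith) (by linarith)
        obtain ⟨q, hqB, hq⟩ := Metric.mem_closure_iff.mp hxc ε hε
        have habs : |x.1 - q.1| ≤ dist x q := by
          rw [Prod.dist_eq]
          exact le_trans (le_of_eq (Real.dist_eq _ _).symm) (le_max_left _ _)
        have habs' := lt_of_le_of_lt habs hq
        rw [abs_lt] at habs'
        have hm1 := min_le_left (x.1 - (α - b)) ((α - a) - x.1)
        have hm2 := min_le_right (x.1 - (α - b)) ((α - a) - x.1)
        have hqS : q ∈ S α := ⟨by linarith, by linarith⟩
        exact Set.eq_empty_iff_forall_notMem.mp hBS q ⟨hqB, hqS⟩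
      have hsubsing : ∀ c : ℝ, Set.Subsingleton
          ((closure B ∩ S α) ∩ {x : ℝ × ℝ | x.1 = c}) := by
        intro c x ⟨⟨hxc, hxS⟩, hx1⟩ y ⟨⟨hyc, hyS⟩, hy1⟩
        by_contra hne
        have hne2 : x.2 ≠ y.2 := by
          intro h
          exact hne (Prod.ext (by rw [hx1, hy1]) h)
        have hxsq : (x.1 - z.1)^2 + (x.2 - z.2)^2 ≤ r^2 := elen_le_sq (hBc hxc)
        have hysq : (y.1 - z.1)^2 + (y.2 - z.2)^2 ≤ r^2 := elen_le_sq (hBc hyc)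
        rw [hx1] at hxsq
        rw [hy1] at hysq
        have hmid := aux_sq_mid r c x.2 y.2 z.1 z.2 hxsq hysq hne2
        have hmB : ((c, (x.2 + y.2)/2) : ℝ × ℝ) ∈ B := by
          show elen (((c, (x.2 + y.2)/2) : ℝ × ℝ) - z) < r
          rw [elen_lt_iff hr]
          exact hmid
        have hmS : ((c, (x.2 + y.2)/2) : ℝ × ℝ) ∈ S α := by
          show α - c ∈ Set.Icc a b
          rw [← hx1]
          exact hxS
        exact Set.eq_empty_iff_forall_notMem.mp hBS _ ⟨hmB, hmS⟩
      have hK2 : (closure B ∩ S α).encard ≤ 2 := by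
        have hcover : closure B ∩ S α ⊆
            ((closure B ∩ S α) ∩ {x : ℝ × ℝ | x.1 = α - b}) ∪
            ((closure B ∩ S α) ∩ {x : ℝ × ℝ | x.1 = α - a}) := by
          intro x hx
          rcases hlines hx with h | h
          · exact Or.inl ⟨hx, h⟩
          · exact Or.inr ⟨hx, h⟩
        refine (Set.encard_mono hcover).trans ?_
        refine (Set.encard_union_le _ _).trans ?_
        have e1 := Set.encard_le_one_iff.mpr (fun a' b' ha' hb' => hsubsing (α - b) ha' hb')
        have e2 := Set.encard_le_one_iff.mpr (fun a' b' ha' hb' => hsubsing (α - a) ha' hb')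
        calc _ ≤ (1 : ℕ∞) + 1 := add_le_add e1 e2
          _ = 2 := one_add_one_eq_two
      calc (g α '' (closure B ∩ S α) \ g α '' (B ∩ S α)).encard
          ≤ (g α '' (closure B ∩ S α)).encard := Set.encard_mono Set.diff_subset
        _ ≤ (closure B ∩ S α).encard := Set.encard_image_le _ _
        _ ≤ 2 := hK2
    · -- nonempty case
      have hpsq : (p.1 - z.1)^2 + (p.2 - z.2)^2 < r^2 := (elen_lt_iff hr).mp hpB
      obtain ⟨hpS1, hpS2⟩ := hpS
      have hKsub : closure B ∩ S α ⊆ closure (B ∩ S α) := by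
        rintro x ⟨hxc, hxS⟩
        obtain ⟨hxS1, hxS2⟩ := hxS
        have hxsq : (x.1 - z.1)^2 + (x.2 - z.2)^2 ≤ r^2 := elen_le_sq (hBc hxc)
        have hts : Tendsto (fun n : ℕ => x + ((1:ℝ)/(n+1)) • (p - x)) atTop (nhds x) := by
          have hl : Tendsto (fun n : ℕ => (1:ℝ)/(n+1)) atTop (nhds 0) :=
            tendsto_one_div_add_atTop_nhds_zero_nat
          have h2 := Filter.Tendsto.add
            (tendsto_const_nhds : Tendsto (fun _ : ℕ => x) atTop (nhds x))
            (hl.smul_const (p - x))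
          simpa using h2
        refine mem_closure_of_tendsto hts (Filter.Eventually.of_forall fun n => ?_)
        · 
          have hn0 : (0:ℝ) < (n:ℝ) + 1 := by positivity
          have h0 : (0:ℝ) < 1/((n:ℝ)+1) := by positivity
          have h1 : (1:ℝ)/((n:ℝ)+1) ≤ 1 := by
            rw [div_le_one hn0]
            linarith [show (0:ℝ) ≤ (n:ℝ) from Nat.cast_nonneg n]
          have e1 : (x + ((1:ℝ)/(n+1)) • (p - x)).1 = x.1 + (1/((n:ℝ)+1)) * (p.1 - x.1) := rfl
          have e2 : (x + ((1:ℝ)/(n+1)) • (p - x)).2 = x.2 + (1/((n:ℝ)+1)) * (p.2 - x.2) := rfl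
          constructor
          · show elen (x + ((1:ℝ)/(n+1)) • (p - x) - z) < r
            rw [elen_lt_iff hr]
            have e1' : (x + ((1:ℝ)/(n+1)) • (p - x) - z).1
                = x.1 + (1/((n:ℝ)+1)) * (p.1 - x.1) - z.1 := rfl
            have e2' : (x + ((1:ℝ)/(n+1)) • (p - x) - z).2
                = x.2 + (1/((n:ℝ)+1)) * (p.2 - x.2) - z.2 := rfl
            rw [e1', e2']
            exact aux_sq_combo r x.1 x.2 p.1 p.2 z.1 z.2 _ hxsq hpsq h0 h1
          · show α - (x + ((1:ℝ)/(n+1)) • (p - x)).1 ∈ Set.Icc a b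
            rw [e1]
            constructor
            · nlinarith [mul_nonneg (by linarith : (0:ℝ) ≤ 1 - 1/((n:ℝ)+1))
                  (by linarith : (0:ℝ) ≤ α - x.1 - a),
                mul_nonneg h0.le (by linarith : (0:ℝ) ≤ α - p.1 - a)]
            · nlinarith [mul_nonneg (by linarith : (0:ℝ) ≤ 1 - 1/((n:ℝ)+1))
                  (by linarith : (0:ℝ) ≤ b - (α - x.1)),
                mul_nonneg h0.le (by linarith : (0:ℝ) ≤ b - (α - p.1))]
      have hconv : Convex ℝ (B ∩ S α) := by
        rintro x ⟨hxB, hxS⟩ y ⟨hyB, hyS⟩ u v hu hv huv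
        obtain ⟨hxS1, hxS2⟩ := hxS
        obtain ⟨hyS1, hyS2⟩ := hyS
        obtain rfl : v = 1 - u := by linarith
        have hu1 : u ≤ 1 := by linarith
        have hxsq : (x.1 - z.1)^2 + (x.2 - z.2)^2 < r^2 := (elen_lt_iff hr).mp hxB
        have hysq : (y.1 - z.1)^2 + (y.2 - z.2)^2 < r^2 := (elen_lt_iff hr).mp hyB
        have e1 : (u • x + (1-u) • y).1 = u * x.1 + (1-u) * y.1 := rfl
        constructor
        · show elen (u • x + (1-u) • y - z) < r
          rw [elen_lt_iff hr]
          have e1' : (u • x + (1-u) • y - z).1 = u * x.1 + (1-u) * y.1 - z.1 := rfl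
          have e2' : (u • x + (1-u) • y - z).2 = u * x.2 + (1-u) * y.2 - z.2 := rfl
          rw [e1', e2']
          exact aux_sq_conv r x.1 x.2 y.1 y.2 z.1 z.2 u hxsq hysq hu hu1
        · show α - (u • x + (1-u) • y).1 ∈ Set.Icc a b
          rw [e1]
          constructor
          · nlinarith [mul_nonneg hu (by linarith : (0:ℝ) ≤ α - x.1 - a),
              mul_nonneg (by linarith : (0:ℝ) ≤ 1-u) (by linarith : (0:ℝ) ≤ α - y.1 - a)]
          · nlinarith [mul_nonneg hu (by linarith : (0:ℝ) ≤ b - (α - x.1)),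
              mul_nonneg (by linarith : (0:ℝ) ≤ 1-u) (by linarith : (0:ℝ) ≤ b - (α - y.1))]
      have hI : IsPreconnected (g α '' (B ∩ S α)) :=
        hconv.isPreconnected.image _ (hgS.mono Set.inter_subset_right)
      have hJc : IsCompact (closure (B ∩ S α)) :=
        hclosBcomp.of_isClosed_subset isClosed_closure (closure_mono Set.inter_subset_left)
      have hJS : closure (B ∩ S α) ⊆ S α :=
        closure_minimal Set.inter_subset_right hSclosed
      have hgJ : ContinuousOn (g α) (closure (B ∩ S α)) := hgS.mono hJS
      have himgc : IsCompact (g α '' closure (B ∩ S α)) := hJc.image_of_continuousOn hgJ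
      have hbdd : Bornology.IsBounded (g α '' (B ∩ S α)) :=
        himgc.isBounded.subset (Set.image_mono subset_closure)
      have hne : (g α '' (B ∩ S α)).Nonempty :=
        ⟨g α p, Set.mem_image_of_mem _ ⟨hpB, hpS1, hpS2⟩⟩
      have hdiff : (g α '' (closure B ∩ S α)) \ (g α '' (B ∩ S α)) ⊆
          closure (g α '' (B ∩ S α)) \ (g α '' (B ∩ S α)) := by
        rintro y ⟨hy1, hy2⟩
        refine ⟨?_, hy2⟩
        have hsub2 : g α '' (closure B ∩ S α) ⊆ g α '' closure (B ∩ S α) :=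
          Set.image_mono hKsub
        exact hgJ.image_closure (hsub2 hy1)
      exact (Set.encard_mono hdiff).trans (aux_interval _ hne hbdd hI)

  -- slice description
  have hslice : ∀ α : ℝ, {y : ℝ | (α, y) ∈ T} =
      (g α '' (closure B ∩ S α)) \ (g α '' (B ∩ S α)) := by
    intro α
    ext y
    simp only [hTdef, Set.mem_diff, Set.mem_setOf_eq]
    rw [hmem α, hmem α]
  constructor
  · rw [show (volume : Measure (ℝ × ℝ)) = (volume : Measure ℝ).prod volume from
      Measure.volume_eq_prod ℝ ℝ]
    rw [Measure.measure_prod_null hTmeas]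
    refine Filter.Eventually.of_forall fun α => ?_
    have hpre : Prod.mk α ⁻¹' T = {y : ℝ | (α, y) ∈ T} := rfl
    have hfin : {y : ℝ | (α, y) ∈ T}.Finite := by
      by_contra h
      have := Set.Infinite.encard_eq h
      rw [hslice α] at this
      have h2 := hclaim α
      rw [this] at h2
      exact absurd h2 (by simp)
    simp only [Pi.zero_apply, hpre]
    exact hfin.countable.measure_zero _
  · intro α
    have himg : T ∩ {w : ℝ × ℝ | w.1 = α} = (fun y => (α, y)) '' {y : ℝ | (α, y) ∈ T} := by
      ext w
      constructor
      · rintro ⟨hwT, hw1⟩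
        have hw : ((α : ℝ), w.2) = w := Prod.ext (by exact hw1.symm) rfl
        exact ⟨w.2, by rw [Set.mem_setOf_eq, hw]; exact hwT, hw⟩
      · rintro ⟨y, hy, rfl⟩
        exact ⟨hy, rfl⟩
    rw [himg, Function.Injective.encard_image (fun y1 y2 h => congrArg Prod.snd h)]
    rw [hslice α]
    exact hclaim α
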